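/- Let d ≥ 1, let μ be a Borel measure on ℝ^d, let R : ℝ^d → [0,∞) be measurable, and fix b ∈ (0,1). Then there exist constants 0 < c₁ ≤ c₂, depending only on b, such that c₁·∫_{ℝ^d} (1 + R(ξ))^{b−1} μ(dξ) ≤ ∫₀¹ s^{−b} ( ∫_{ℝ^d} exp(−2sR(ξ)) μ(dξ) ) ds ≤ c₂·∫_{ℝ^d} (1 + R(ξ))^{b−1} μ(dξ), where both sides may be infinite simultaneously. -/

import Mathlib

set_option maxHeartbeats 1000000

open MeasureTheory Set

section Stmt8Aux
open Real

lemma exp_neg_le_rpow' {q x : ℝ} (hq0 : 0 < q) (hq1 : q ≤ 1) (hx : 0 < x) :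
    Real.exp (-x) ≤ x ^ (-q) := by
  have hxq : x ^ q ≤ Real.exp x := by
    rcases le_total x 1 with h | h
    · exact le_trans (Real.rpow_le_one hx.le h hq0.le)
        (by linarith [Real.add_one_le_exp x])
    · calc x ^ q ≤ x ^ (1:ℝ) := Real.rpow_le_rpow_of_exponent_le h hq1
        _ = x := Real.rpow_one x
        _ ≤ Real.exp x := by linarith [Real.add_one_le_exp x]
  have hq : (0:ℝ) < x ^ q := Real.rpow_pos_of_pos hx q
  rw [Real.exp_neg, Real.rpow_neg hx.le]
  exact inv_anti₀ hq hxq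

lemma exists_two_pow' (x : ℝ) (hx : 1 ≤ x) : ∃ n : ℕ, x ≤ 2 ^ n ∧ (2:ℝ) ^ n < 2 * x := by
  classical
  have hex : ∃ n : ℕ, x ≤ (2:ℝ) ^ n := by
    obtain ⟨n, hn⟩ := pow_unbounded_of_one_lt x (by norm_num : (1:ℝ) < 2)
    exact ⟨n, hn.le⟩
  refine ⟨Nat.find hex, Nat.find_spec hex, ?_⟩
  rcases eq_or_ne (Nat.find hex) 0 with h0 | h0
  · rw [h0]; norm_num; linarith
  · obtain ⟨m, hm⟩ : ∃ m, Nat.find hex = m + 1 :=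
      ⟨_, (Nat.succ_pred_eq_of_pos (Nat.pos_of_ne_zero h0)).symm⟩
    have h2 : (2:ℝ) ^ m < x := not_le.mp (Nat.find_min hex (by omega))
    rw [hm, pow_succ]
    linarith

lemma rpow_pow_comm' {x : ℝ} (hx : 0 ≤ x) (m : ℕ) (e : ℝ) : (x ^ m) ^ e = (x ^ e) ^ m := by
  rw [← Real.rpow_natCast x m, ← Real.rpow_mul hx, mul_comm, Real.rpow_mul hx, Real.rpow_natCast]

lemma Ioc_eq_iUnion' : Ioc (0:ℝ) 1 = ⋃ n : ℕ, Ioc ((2⁻¹:ℝ) ^ (n+1)) ((2⁻¹:ℝ) ^ n) := by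
  ext x
  simp only [mem_Ioc, mem_iUnion]
  constructor
  · rintro ⟨hx0, hx1⟩
    classical
    have hex : ∃ n : ℕ, (2⁻¹:ℝ) ^ (n+1) < x := by
      obtain ⟨n, hn⟩ := exists_pow_lt_of_lt_one hx0 (by norm_num : (2⁻¹:ℝ) < 1)
      exact ⟨n, lt_of_le_of_lt
        (pow_le_pow_of_le_one (by norm_num) (by norm_num) (Nat.le_succ n)) hn⟩
    refine ⟨Nat.find hex, Nat.find_spec hex, ?_⟩
    rcases eq_or_ne (Nat.find hex) 0 with h0 | h0
    · rw [h0]; simpa using hx1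
    · obtain ⟨m, hm⟩ : ∃ m, Nat.find hex = m + 1 :=
        ⟨_, (Nat.succ_pred_eq_of_pos (Nat.pos_of_ne_zero h0)).symm⟩
      have := Nat.find_min hex (m := m) (by omega)
      rw [hm]
      exact not_lt.mp this
  · rintro ⟨n, h1, h2⟩
    refine ⟨lt_of_le_of_lt (by positivity) h1, le_trans h2 ?_⟩
    exact pow_le_one₀ (by norm_num) (by norm_num)

lemma pairwise_disj' : Pairwise (Function.onFun Disjoint
    fun n : ℕ => Ioc ((2⁻¹:ℝ) ^ (n+1)) ((2⁻¹:ℝ) ^ n)) := by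
  have key : ∀ m n : ℕ, m < n →
      Disjoint (Ioc ((2⁻¹:ℝ) ^ (m+1)) ((2⁻¹:ℝ) ^ m)) (Ioc ((2⁻¹:ℝ) ^ (n+1)) ((2⁻¹:ℝ) ^ n)) := by
    intro m n h
    refine Set.Ioc_disjoint_Ioc.mpr ?_
    calc min ((2⁻¹:ℝ)^m) ((2⁻¹:ℝ)^n) ≤ (2⁻¹:ℝ)^n := min_le_right _ _
      _ ≤ (2⁻¹:ℝ)^(m+1) := pow_le_pow_of_le_one (by norm_num) (by norm_num) h
      _ ≤ max ((2⁻¹:ℝ)^(m+1)) ((2⁻¹:ℝ)^(n+1)) := le_max_left _ _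
  intro m n hmn
  rcases hmn.lt_or_gt with h | h
  · exact key m n h
  · exact (key n m h).symm

lemma tsum_nat_split (f : ℕ → ENNReal) (N : ℕ) :
    ∑' n, f n = (∑ i ∈ Finset.range N, f i) + ∑' i, f (N + i) := by
  induction N with
  | zero => simp
  | succ k ih =>
    rw [ih, Finset.sum_range_succ]
    have h : (∑' i, f (k + i)) = f k + ∑' i, f (k + 1 + i) := by
      have h0 := tsum_eq_zero_add' (f := fun i => f (k + i)) ENNReal.summable
      simp only [Nat.add_zero] at h0
      rw [h0]
      congr 1
      exact tsum_congr fun i => by congr 1; omega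
    rw [h, ← add_assoc]

lemma lower_pointwise' {b : ℝ} (hb : b ∈ Ioo (0:ℝ) 1) {r : ℝ} (hr : 0 ≤ r) :
    ENNReal.ofReal (Real.exp (-2) / 4) * ENNReal.ofReal ((1 + r) ^ (b - 1)) ≤
      ∑' n : ℕ, ENNReal.ofReal ((2⁻¹:ℝ) ^ (n+1) * (((2⁻¹:ℝ) ^ n) ^ (-b)) *
        Real.exp (-2 * ((2⁻¹:ℝ) ^ n) * r)) := by
  obtain ⟨hb0, hb1⟩ := hb
  obtain ⟨n, hn1, hn2⟩ := exists_two_pow' (1 + r) (by linarith)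
  refine le_trans ?_ (ENNReal.le_tsum n)
  rw [← ENNReal.ofReal_mul (by positivity)]
  apply ENNReal.ofReal_le_ofReal
  set u : ℝ := (2⁻¹:ℝ) ^ n with hu
  have hTpos : (0:ℝ) < (2:ℝ) ^ n := by positivity
  have hupos : 0 < u := by positivity
  have huT : u = ((2:ℝ) ^ n)⁻¹ := by rw [hu, inv_pow]
  have hu1 : u * (1 + r) ≤ 1 := by
    rw [huT]
    calc ((2:ℝ)^n)⁻¹ * (1+r) ≤ ((2:ℝ)^n)⁻¹ * (2:ℝ)^n :=
          mul_le_mul_of_nonneg_left hn1 (by positivity)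
      _ = 1 := inv_mul_cancel₀ hTpos.ne'
  have e1 : Real.exp (-2) ≤ Real.exp (-2 * u * r) := by
    apply Real.exp_le_exp.mpr; nlinarith
  have h2 : u * u ^ (-b) = u ^ (1 - b) := by
    have h : (1:ℝ) - b = 1 + (-b) := by ring
    rw [h, Real.rpow_add hupos, Real.rpow_one]
  have hinv : (2 * (1 + r))⁻¹ ≤ u := by
    rw [huT]
    exact inv_anti₀ hTpos hn2.le
  have h4 : ((2 * (1 + r))⁻¹) ^ (1 - b) = (2 * (1 + r)) ^ (b - 1) := by
    rw [← Real.rpow_neg_one (2 * (1+r)), ← Real.rpow_mul (by positivity)]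
    congr 1; ring
  have h5 : (2 * (1 + r)) ^ (b - 1) = (2:ℝ) ^ (b-1) * (1 + r) ^ (b - 1) :=
    Real.mul_rpow (by norm_num) (by linarith)
  have h6 : (2:ℝ)⁻¹ ≤ (2:ℝ) ^ (b-1) := by
    have := Real.rpow_le_rpow_of_exponent_le (by norm_num : (1:ℝ) ≤ 2)
      (by linarith : (-1:ℝ) ≤ b - 1)
    rwa [Real.rpow_neg_one] at this
  have e2 : 2⁻¹ * (1 + r) ^ (b - 1) ≤ u ^ (1 - b) := by
    have h3 : ((2 * (1 + r))⁻¹) ^ (1 - b) ≤ u ^ (1 - b) :=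
      Real.rpow_le_rpow (by positivity) hinv (by linarith)
    rw [h4, h5] at h3
    refine le_trans ?_ h3
    exact mul_le_mul_of_nonneg_right h6 (Real.rpow_nonneg (by linarith) _)
  have hprod : (2⁻¹ * (1 + r) ^ (b - 1)) * Real.exp (-2) ≤
      u ^ (1 - b) * Real.exp (-2 * u * r) :=
    mul_le_mul e2 e1 (Real.exp_pos _).le (Real.rpow_nonneg hupos.le _)
  calc Real.exp (-2) / 4 * (1 + r) ^ (b - 1)
      = 2⁻¹ * ((2⁻¹ * (1 + r) ^ (b - 1)) * Real.exp (-2)) := by ring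
    _ ≤ 2⁻¹ * (u ^ (1 - b) * Real.exp (-2 * u * r)) := by
        apply mul_le_mul_of_nonneg_left hprod; norm_num
    _ = (2⁻¹:ℝ) ^ (n+1) * u ^ (-b) * Real.exp (-2 * u * r) := by
        rw [pow_succ, ← hu, ← h2]; ring

lemma upper_pointwise' {b : ℝ} (hb : b ∈ Ioo (0:ℝ) 1) {r : ℝ} (hr : 0 ≤ r) :
    (∑' n : ℕ, ENNReal.ofReal ((((2⁻¹:ℝ) ^ (n+1)) ^ (1-b)) *
        Real.exp (-2 * ((2⁻¹:ℝ) ^ (n+1)) * r))) ≤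
      ENNReal.ofReal (((1 - (2⁻¹:ℝ) ^ (1-b))⁻¹ +
        Real.exp 1 * ((2:ℝ) ^ (b/2) * ((2:ℝ) ^ (b/2)) / ((2:ℝ) ^ (b/2) - 1))) *
        (1 + r) ^ (b - 1)) := by
  obtain ⟨hb0, hb1⟩ := hb
  set ρ : ℝ := 1 + r with hρdef
  have hρ1 : 1 ≤ ρ := by rw [hρdef]; linarith
  have hρ0 : (0:ℝ) < ρ := by linarith
  set θ : ℝ := (2⁻¹:ℝ) ^ ((1:ℝ)-b) with hθdef
  have hθ0 : 0 < θ := Real.rpow_pos_of_pos (by norm_num) _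
  have hθ1 : θ < 1 := Real.rpow_lt_one (by norm_num) (by norm_num) (by linarith)
  set y : ℝ := (2:ℝ) ^ (b/2) with hydef
  have hy1 : 1 < y := by
    have := Real.rpow_lt_rpow_of_exponent_lt (by norm_num : (1:ℝ) < 2)
      (show (0:ℝ) < b/2 by linarith)
    rwa [Real.rpow_zero] at this
  have hym : 0 < y - 1 := by linarith
  set q : ℝ := 1 - b/2 with hqdef
  have hq0 : 0 < q := by rw [hqdef]; linarith
  have hq1 : q ≤ 1 := by rw [hqdef]; linarith
  obtain ⟨N, hN1, hN2⟩ := exists_two_pow' ρ hρ1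
  set X : ℝ := ρ ^ (b-1) with hXdef
  have hX0 : 0 ≤ X := Real.rpow_nonneg hρ0.le _
  set K₁ : ℝ := (1 - θ)⁻¹ with hK₁def
  have h1mθ : 0 < 1 - θ := by linarith
  have hK₁0 : 0 ≤ K₁ := by rw [hK₁def]; exact inv_nonneg.mpr h1mθ.le
  set K₂ : ℝ := Real.exp 1 * (y * y / (y - 1)) with hK₂def
  have hK₂0 : 0 ≤ K₂ := by rw [hK₂def]; positivity
  have hsplit_tsum : (∑' n : ℕ, ENNReal.ofReal ((((2⁻¹:ℝ) ^ (n+1)) ^ (1-b)) *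
      Real.exp (-2 * ((2⁻¹:ℝ) ^ (n+1)) * r))) =
      (∑ i ∈ Finset.range N, ENNReal.ofReal ((((2⁻¹:ℝ) ^ (i+1)) ^ (1-b)) *
        Real.exp (-2 * ((2⁻¹:ℝ) ^ (i+1)) * r))) +
      ∑' i : ℕ, ENNReal.ofReal ((((2⁻¹:ℝ) ^ (N+i+1)) ^ (1-b)) *
        Real.exp (-2 * ((2⁻¹:ℝ) ^ (N+i+1)) * r)) :=
    tsum_nat_split _ N
  rw [hsplit_tsum]
  have hXinv : (ρ⁻¹) ^ ((1:ℝ)-b) = X := by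
    rw [Real.inv_rpow hρ0.le, ← Real.rpow_neg hρ0.le, hXdef]
    congr 1; ring
  -- tail bound
  have htail : (∑' i : ℕ, ENNReal.ofReal ((((2⁻¹:ℝ) ^ (N+i+1)) ^ (1-b)) *
      Real.exp (-2 * ((2⁻¹:ℝ) ^ (N+i+1)) * r))) ≤ ENNReal.ofReal (K₁ * X) := by
    have hterm : ∀ i : ℕ, ENNReal.ofReal ((((2⁻¹:ℝ) ^ (N+i+1)) ^ (1-b)) *
        Real.exp (-2 * ((2⁻¹:ℝ) ^ (N+i+1)) * r)) ≤
        ENNReal.ofReal (((2⁻¹:ℝ) ^ (N+1)) ^ (1-b)) * (ENNReal.ofReal θ) ^ i := by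
      intro i
      rw [← ENNReal.ofReal_pow hθ0.le, ← ENNReal.ofReal_mul (by positivity)]
      apply ENNReal.ofReal_le_ofReal
      have hexp1 : Real.exp (-2 * ((2⁻¹:ℝ) ^ (N+i+1)) * r) ≤ 1 := by
        have h := Real.exp_le_exp.mpr (show -2 * ((2⁻¹:ℝ) ^ (N+i+1)) * r ≤ 0 by
          have : (0:ℝ) < (2⁻¹:ℝ) ^ (N+i+1) := by positivity
          nlinarith)
        rwa [Real.exp_zero] at h
      have hsplit : ((2⁻¹:ℝ) ^ (N+i+1)) ^ ((1:ℝ)-b) =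
          (((2⁻¹:ℝ) ^ (N+1)) ^ ((1:ℝ)-b)) * θ ^ i := by
        have h1 : (2⁻¹:ℝ) ^ (N+i+1) = (2⁻¹:ℝ) ^ (N+1) * (2⁻¹:ℝ) ^ i := by
          rw [← pow_add]
          congr 1
          omega
        rw [h1, Real.mul_rpow (by positivity) (by positivity),
          rpow_pow_comm' (by norm_num : (0:ℝ) ≤ 2⁻¹) i, ← hθdef]
      rw [hsplit]
      have h2 : 0 ≤ (((2⁻¹:ℝ) ^ (N+1)) ^ ((1:ℝ)-b)) * θ ^ i := by positivity
      exact mul_le_of_le_one_right h2 hexp1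
    calc (∑' i : ℕ, ENNReal.ofReal ((((2⁻¹:ℝ) ^ (N+i+1)) ^ (1-b)) *
        Real.exp (-2 * ((2⁻¹:ℝ) ^ (N+i+1)) * r)))
        ≤ ∑' i : ℕ, ENNReal.ofReal (((2⁻¹:ℝ) ^ (N+1)) ^ (1-b)) * (ENNReal.ofReal θ) ^ i :=
          ENNReal.tsum_le_tsum hterm
      _ = ENNReal.ofReal (((2⁻¹:ℝ) ^ (N+1)) ^ (1-b)) * (1 - ENNReal.ofReal θ)⁻¹ := by
          rw [ENNReal.tsum_mul_left, ENNReal.tsum_geometric]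
      _ = ENNReal.ofReal (((2⁻¹:ℝ) ^ (N+1)) ^ (1-b)) * ENNReal.ofReal ((1-θ)⁻¹) := by
          congr 1
          rw [ENNReal.ofReal_inv_of_pos (by linarith), ENNReal.ofReal_sub 1 hθ0.le,
            ENNReal.ofReal_one]
      _ = ENNReal.ofReal ((((2⁻¹:ℝ) ^ (N+1)) ^ (1-b)) * (1-θ)⁻¹) := by
          rw [ENNReal.ofReal_mul (by positivity)]
      _ ≤ ENNReal.ofReal (K₁ * X) := by
          apply ENNReal.ofReal_le_ofReal
          have hc : ((2⁻¹:ℝ) ^ (N+1)) ≤ ρ⁻¹ := by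
            rw [inv_pow]
            apply inv_anti₀ hρ0
            calc ρ ≤ (2:ℝ)^N := hN1
              _ ≤ (2:ℝ)^(N+1) := by rw [pow_succ]; nlinarith [pow_pos (show (0:ℝ)<2 by norm_num) N]
          have hcX : ((2⁻¹:ℝ) ^ (N+1)) ^ ((1:ℝ)-b) ≤ X := by
            rw [← hXinv]
            exact Real.rpow_le_rpow (by positivity) hc (by linarith)
          have h1θ : 0 ≤ (1-θ)⁻¹ := inv_nonneg.mpr h1mθ.le
          calc (((2⁻¹:ℝ) ^ (N+1)) ^ ((1:ℝ)-b)) * (1-θ)⁻¹ ≤ X * (1-θ)⁻¹ :=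
                mul_le_mul_of_nonneg_right hcX h1θ
            _ = K₁ * X := by rw [hK₁def]; ring
  -- head bound
  have hhead : (∑ i ∈ Finset.range N, ENNReal.ofReal ((((2⁻¹:ℝ) ^ (i+1)) ^ (1-b)) *
      Real.exp (-2 * ((2⁻¹:ℝ) ^ (i+1)) * r))) ≤ ENNReal.ofReal (K₂ * X) := by
    rw [← ENNReal.ofReal_sum_of_nonneg (fun i _ => by positivity)]
    apply ENNReal.ofReal_le_ofReal
    have hterm : ∀ i : ℕ, (((2⁻¹:ℝ) ^ (i+1)) ^ ((1:ℝ)-b)) *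
        Real.exp (-2 * ((2⁻¹:ℝ) ^ (i+1)) * r) ≤ (Real.exp 1 * ρ ^ (-q)) * y ^ (i+1) := by
      intro i
      set v : ℝ := (2⁻¹:ℝ) ^ (i+1) with hvdef
      have hv0 : 0 < v := by positivity
      have hv2 : 2 * v ≤ 1 := by
        have : v ≤ 2⁻¹ := by
          rw [hvdef]
          calc (2⁻¹:ℝ) ^ (i+1) ≤ (2⁻¹:ℝ) ^ 1 :=
            pow_le_pow_of_le_one (by norm_num) (by norm_num) (by omega)
          _ = 2⁻¹ := pow_one _
        linarith
      have hexp : Real.exp (-2 * v * r) ≤ Real.exp 1 * (2 * v * ρ) ^ (-q) := by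
        have hsplit : -2 * v * r = 2*v + -(2*v*ρ) := by rw [hρdef]; ring
        rw [hsplit, Real.exp_add]
        exact mul_le_mul (Real.exp_le_exp.mpr (by linarith))
          (exp_neg_le_rpow' hq0 hq1 (by positivity)) (Real.exp_pos _).le (Real.exp_pos _).le
      have hr1 : (2 * v * ρ) ^ (-q) = (2*v) ^ (-q) * ρ ^ (-q) :=
        Real.mul_rpow (by positivity) hρ0.le
      have hr2 : (2*v) ^ (-q) ≤ v ^ (-q) :=
        Real.rpow_le_rpow_of_nonpos hv0 (by linarith) (by linarith)
      have hr3 : v ^ ((1:ℝ)-b) * v ^ (-q) = v ^ (-(b/2)) := by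
        rw [← Real.rpow_add hv0]
        congr 1; rw [hqdef]; ring
      have hr4 : v ^ (-(b/2):ℝ) = y ^ (i+1) := by
        rw [hvdef, rpow_pow_comm' (by norm_num : (0:ℝ) ≤ 2⁻¹)]
        congr 1
        rw [Real.inv_rpow (by norm_num : (0:ℝ) ≤ 2), Real.rpow_neg (by norm_num : (0:ℝ) ≤ 2),
          inv_inv, hydef]
      have hv1b : 0 ≤ v ^ ((1:ℝ)-b) := Real.rpow_nonneg hv0.le _
      calc v ^ ((1:ℝ)-b) * Real.exp (-2 * v * r)
          ≤ v ^ ((1:ℝ)-b) * (Real.exp 1 * (2 * v * ρ) ^ (-q)) :=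
            mul_le_mul_of_nonneg_left hexp hv1b
        _ = Real.exp 1 * (v ^ ((1:ℝ)-b) * ((2*v) ^ (-q) * ρ ^ (-q))) := by rw [hr1]; ring
        _ ≤ Real.exp 1 * (v ^ ((1:ℝ)-b) * (v ^ (-q) * ρ ^ (-q))) := by
            apply mul_le_mul_of_nonneg_left _ (Real.exp_pos _).le
            apply mul_le_mul_of_nonneg_left _ hv1b
            exact mul_le_mul_of_nonneg_right hr2 (Real.rpow_nonneg hρ0.le _)
        _ = (Real.exp 1 * ρ ^ (-q)) * (v ^ ((1:ℝ)-b) * v ^ (-q)) := by ring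
        _ = (Real.exp 1 * ρ ^ (-q)) * y ^ (i+1) := by rw [hr3, hr4]
    have hgeom : (∑ i ∈ Finset.range N, y ^ (i+1)) ≤ y ^ N / (y-1) * y := by
      have h1 : (∑ i ∈ Finset.range N, y ^ (i+1)) = (∑ i ∈ Finset.range N, y ^ i) * y := by
        rw [Finset.sum_mul]
        exact Finset.sum_congr rfl fun i _ => pow_succ y i
      rw [h1, geom_sum_eq hy1.ne' N]
      have h2 : (y ^ N - 1) / (y - 1) ≤ y ^ N / (y-1) := by
        exact (div_le_div_iff_of_pos_right hym).mpr (by linarith)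
      nlinarith [h2, hy1]
    have hyN : y ^ N ≤ y * ρ ^ (b/2) := by
      have h1 : y ^ N = ((2:ℝ) ^ N) ^ (b/2) := by
        rw [rpow_pow_comm' (by norm_num : (0:ℝ) ≤ 2), hydef]
      rw [h1]
      calc ((2:ℝ) ^ N) ^ (b/2) ≤ (2*ρ) ^ (b/2) :=
            Real.rpow_le_rpow (by positivity) hN2.le (by linarith)
        _ = (2:ℝ) ^ (b/2) * ρ ^ (b/2) := Real.mul_rpow (by norm_num) hρ0.le
        _ = y * ρ ^ (b/2) := by rw [hydef]
    have hρq : ρ ^ (-q) * ρ ^ (b/2) = X := by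
      rw [← Real.rpow_add hρ0, hXdef]
      congr 1; rw [hqdef]; ring
    have hE0 : 0 ≤ Real.exp 1 * ρ ^ (-q) := by positivity
    calc (∑ i ∈ Finset.range N, (((2⁻¹:ℝ) ^ (i+1)) ^ ((1:ℝ)-b)) *
          Real.exp (-2 * ((2⁻¹:ℝ) ^ (i+1)) * r))
        ≤ ∑ i ∈ Finset.range N, (Real.exp 1 * ρ ^ (-q)) * y ^ (i+1) :=
          Finset.sum_le_sum fun i _ => hterm i
      _ = (Real.exp 1 * ρ ^ (-q)) * ∑ i ∈ Finset.range N, y ^ (i+1) := by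
          rw [Finset.mul_sum]
      _ ≤ (Real.exp 1 * ρ ^ (-q)) * (y ^ N / (y-1) * y) :=
          mul_le_mul_of_nonneg_left hgeom hE0
      _ ≤ (Real.exp 1 * ρ ^ (-q)) * ((y * ρ ^ (b/2)) / (y-1) * y) := by
          apply mul_le_mul_of_nonneg_left _ hE0
          have h3 := (div_le_div_iff_of_pos_right hym).mpr hyN
          nlinarith [h3, hy1]
      _ = K₂ * (ρ ^ (-q) * ρ ^ (b/2)) := by rw [hK₂def]; field_simp
      _ = K₂ * X := by rw [hρq]
  calc (∑ i ∈ Finset.range N, ENNReal.ofReal ((((2⁻¹:ℝ) ^ (i+1)) ^ (1-b)) *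
        Real.exp (-2 * ((2⁻¹:ℝ) ^ (i+1)) * r))) +
      (∑' i : ℕ, ENNReal.ofReal ((((2⁻¹:ℝ) ^ (N+i+1)) ^ (1-b)) *
        Real.exp (-2 * ((2⁻¹:ℝ) ^ (N+i+1)) * r)))
      ≤ ENNReal.ofReal (K₂ * X) + ENNReal.ofReal (K₁ * X) := add_le_add hhead htail
    _ = ENNReal.ofReal ((K₁ + K₂) * X) := by
        rw [← ENNReal.ofReal_add (by positivity) (by positivity)]
        congr 1; ring

lemma mul_rpow_neg' {x : ℝ} (hx : 0 < x) (b : ℝ) : x * x ^ (-b) = x ^ ((1:ℝ)-b) := by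
  rw [show (1:ℝ)-b = 1 + (-b) by ring, Real.rpow_add hx, Real.rpow_one]

end Stmt8Aux

/-- `∫₀¹ s^{-b} ∫ e^{-2sR} dμ ds ≍ ∫ (1+R)^{b-1} dμ` with constants depending
only on `b ∈ (0,1)`. -/
theorem stmt_8 (b : ℝ) (hb : b ∈ Ioo (0 : ℝ) 1) :
    ∃ c₁ c₂ : ℝ, 0 < c₁ ∧ c₁ ≤ c₂ ∧
      ∀ (d : ℕ), 1 ≤ d →
      ∀ (μ : Measure (EuclideanSpace ℝ (Fin d)))
        (R : EuclideanSpace ℝ (Fin d) → ℝ),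
        Measurable R → (∀ ξ, 0 ≤ R ξ) →
        ENNReal.ofReal c₁ * (∫⁻ ξ, ENNReal.ofReal ((1 + R ξ) ^ (b - 1)) ∂μ) ≤
            (∫⁻ s in Ioc (0 : ℝ) 1, ENNReal.ofReal (s ^ (-b)) *
              ∫⁻ ξ, ENNReal.ofReal (Real.exp (-2 * s * R ξ)) ∂μ) ∧
          (∫⁻ s in Ioc (0 : ℝ) 1, ENNReal.ofReal (s ^ (-b)) *
              ∫⁻ ξ, ENNReal.ofReal (Real.exp (-2 * s * R ξ)) ∂μ) ≤
            ENNReal.ofReal c₂ * (∫⁻ ξ, ENNReal.ofReal ((1 + R ξ) ^ (b - 1)) ∂μ) := by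
  obtain ⟨hb0, hb1⟩ := hb
  have hθ0 : 0 < (2⁻¹:ℝ) ^ ((1:ℝ)-b) := Real.rpow_pos_of_pos (by norm_num) _
  have hθ1 : (2⁻¹:ℝ) ^ ((1:ℝ)-b) < 1 :=
    Real.rpow_lt_one (by norm_num) (by norm_num) (by linarith)
  have hy1 : 1 < (2:ℝ) ^ (b/2) := by
    have := Real.rpow_lt_rpow_of_exponent_lt (by norm_num : (1:ℝ) < 2)
      (show (0:ℝ) < b/2 by linarith)
    rwa [Real.rpow_zero] at this
  set c₂ : ℝ := (1 - (2⁻¹:ℝ) ^ ((1:ℝ)-b))⁻¹ +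
      Real.exp 1 * ((2:ℝ) ^ (b/2) * ((2:ℝ) ^ (b/2)) / ((2:ℝ) ^ (b/2) - 1)) with hc₂def
  have hc₂0 : 0 ≤ c₂ := by
    rw [hc₂def]
    have h1 : 0 < 1 - (2⁻¹:ℝ) ^ ((1:ℝ)-b) := by linarith
    have h2 : 0 < (2:ℝ) ^ (b/2) - 1 := by linarith
    positivity
  refine ⟨Real.exp (-2) / 4, c₂, by positivity, ?_, ?_⟩
  · -- c₁ ≤ c₂
    have h1 : Real.exp (-2) ≤ 1 := by
      rw [← Real.exp_zero]; exact Real.exp_le_exp.mpr (by norm_num)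
    have h2 : (1:ℝ) ≤ (1 - (2⁻¹:ℝ) ^ ((1:ℝ)-b))⁻¹ := by
      have h3 : 0 < 1 - (2⁻¹:ℝ) ^ ((1:ℝ)-b) := by linarith
      have h4 : (1 - (2⁻¹:ℝ) ^ ((1:ℝ)-b)) * (1 - (2⁻¹:ℝ) ^ ((1:ℝ)-b))⁻¹ = 1 :=
        mul_inv_cancel₀ h3.ne'
      nlinarith [inv_nonneg.mpr h3.le]
    have h5 : 0 ≤ Real.exp 1 * ((2:ℝ) ^ (b/2) * ((2:ℝ) ^ (b/2)) / ((2:ℝ) ^ (b/2) - 1)) := by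
      have h2' : 0 < (2:ℝ) ^ (b/2) - 1 := by linarith
      positivity
    rw [hc₂def]
    linarith
  intro d _hd μ R hR hR0
  -- antitonicity of the inner integral
  have hI_anti : ∀ ⦃s t : ℝ⦄, 0 ≤ s → s ≤ t →
      (∫⁻ ξ, ENNReal.ofReal (Real.exp (-2 * t * R ξ)) ∂μ) ≤
      ∫⁻ ξ, ENNReal.ofReal (Real.exp (-2 * s * R ξ)) ∂μ := by
    intro s t hs hst
    refine lintegral_mono fun ξ => ENNReal.ofReal_le_ofReal ?_
    have := hR0 ξ
    apply Real.exp_le_exp.mpr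
    nlinarith
  have hJ : (∫⁻ s in Ioc (0 : ℝ) 1, ENNReal.ofReal (s ^ (-b)) *
        ∫⁻ ξ, ENNReal.ofReal (Real.exp (-2 * s * R ξ)) ∂μ) =
      ∑' n : ℕ, ∫⁻ s in Ioc ((2⁻¹:ℝ) ^ (n+1)) ((2⁻¹:ℝ) ^ n),
        ENNReal.ofReal (s ^ (-b)) * ∫⁻ ξ, ENNReal.ofReal (Real.exp (-2 * s * R ξ)) ∂μ := by
    rw [Ioc_eq_iUnion', lintegral_iUnion (fun n => measurableSet_Ioc) pairwise_disj']
  have hvol : ∀ n : ℕ, volume (Ioc ((2⁻¹:ℝ) ^ (n+1)) ((2⁻¹:ℝ) ^ n)) =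
      ENNReal.ofReal ((2⁻¹:ℝ) ^ (n+1)) := by
    intro n
    rw [Real.volume_Ioc]
    congr 1
    rw [pow_succ]
    ring
  constructor
  · -- lower bound
    have piece_lower : ∀ n : ℕ,
        (∫⁻ ξ, ENNReal.ofReal ((2⁻¹:ℝ) ^ (n+1) * (((2⁻¹:ℝ) ^ n) ^ (-b)) *
          Real.exp (-2 * ((2⁻¹:ℝ) ^ n) * R ξ)) ∂μ) ≤
        ∫⁻ s in Ioc ((2⁻¹:ℝ) ^ (n+1)) ((2⁻¹:ℝ) ^ n),
          ENNReal.ofReal (s ^ (-b)) * ∫⁻ ξ, ENNReal.ofReal (Real.exp (-2 * s * R ξ)) ∂μ := by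
      intro n
      have h0 : (0:ℝ) < (2⁻¹:ℝ) ^ (n+1) := by positivity
      have h0' : (0:ℝ) < (2⁻¹:ℝ) ^ n := by positivity
      calc (∫⁻ ξ, ENNReal.ofReal ((2⁻¹:ℝ) ^ (n+1) * (((2⁻¹:ℝ) ^ n) ^ (-b)) *
            Real.exp (-2 * ((2⁻¹:ℝ) ^ n) * R ξ)) ∂μ)
          = ∫⁻ ξ, ENNReal.ofReal ((2⁻¹:ℝ) ^ (n+1) * (((2⁻¹:ℝ) ^ n) ^ (-b))) *
              ENNReal.ofReal (Real.exp (-2 * ((2⁻¹:ℝ) ^ n) * R ξ)) ∂μ :=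
            lintegral_congr fun ξ => ENNReal.ofReal_mul (by positivity)
        _ = ENNReal.ofReal ((2⁻¹:ℝ) ^ (n+1) * (((2⁻¹:ℝ) ^ n) ^ (-b))) *
              ∫⁻ ξ, ENNReal.ofReal (Real.exp (-2 * ((2⁻¹:ℝ) ^ n) * R ξ)) ∂μ :=
            lintegral_const_mul' _ _ ENNReal.ofReal_ne_top
        _ = (ENNReal.ofReal (((2⁻¹:ℝ) ^ n) ^ (-b)) *
              ∫⁻ ξ, ENNReal.ofReal (Real.exp (-2 * ((2⁻¹:ℝ) ^ n) * R ξ)) ∂μ) *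
              ENNReal.ofReal ((2⁻¹:ℝ) ^ (n+1)) := by
            rw [ENNReal.ofReal_mul h0.le]
            ring
        _ = ∫⁻ _ in Ioc ((2⁻¹:ℝ) ^ (n+1)) ((2⁻¹:ℝ) ^ n),
              (ENNReal.ofReal (((2⁻¹:ℝ) ^ n) ^ (-b)) *
               ∫⁻ ξ, ENNReal.ofReal (Real.exp (-2 * ((2⁻¹:ℝ) ^ n) * R ξ)) ∂μ) := by
            rw [setLIntegral_const, hvol n]
        _ ≤ ∫⁻ s in Ioc ((2⁻¹:ℝ) ^ (n+1)) ((2⁻¹:ℝ) ^ n),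
              ENNReal.ofReal (s ^ (-b)) *
                ∫⁻ ξ, ENNReal.ofReal (Real.exp (-2 * s * R ξ)) ∂μ := by
            refine setLIntegral_mono' measurableSet_Ioc fun s hs => ?_
            have hs0 : 0 < s := lt_trans h0 hs.1
            exact mul_le_mul'
              (ENNReal.ofReal_le_ofReal
                (Real.rpow_le_rpow_of_nonpos hs0 hs.2 (by linarith)))
              (hI_anti hs0.le hs.2)
    have hmeas : ∀ n : ℕ, Measurable fun ξ =>
        ENNReal.ofReal ((2⁻¹:ℝ) ^ (n+1) * (((2⁻¹:ℝ) ^ n) ^ (-b)) *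
          Real.exp (-2 * ((2⁻¹:ℝ) ^ n) * R ξ)) := by
      intro n
      exact (((hR.const_mul _).exp).const_mul _).ennreal_ofReal
    calc ENNReal.ofReal (Real.exp (-2) / 4) *
          ∫⁻ ξ, ENNReal.ofReal ((1 + R ξ) ^ (b - 1)) ∂μ
        = ∫⁻ ξ, ENNReal.ofReal (Real.exp (-2) / 4) *
            ENNReal.ofReal ((1 + R ξ) ^ (b - 1)) ∂μ :=
          (lintegral_const_mul' _ _ ENNReal.ofReal_ne_top).symm
      _ ≤ ∫⁻ ξ, ∑' n : ℕ, ENNReal.ofReal ((2⁻¹:ℝ) ^ (n+1) * (((2⁻¹:ℝ) ^ n) ^ (-b)) *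
            Real.exp (-2 * ((2⁻¹:ℝ) ^ n) * R ξ)) ∂μ :=
          lintegral_mono fun ξ => lower_pointwise' ⟨hb0, hb1⟩ (hR0 ξ)
      _ = ∑' n : ℕ, ∫⁻ ξ, ENNReal.ofReal ((2⁻¹:ℝ) ^ (n+1) * (((2⁻¹:ℝ) ^ n) ^ (-b)) *
            Real.exp (-2 * ((2⁻¹:ℝ) ^ n) * R ξ)) ∂μ :=
          lintegral_tsum fun n => (hmeas n).aemeasurable
      _ ≤ ∑' n : ℕ, ∫⁻ s in Ioc ((2⁻¹:ℝ) ^ (n+1)) ((2⁻¹:ℝ) ^ n),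
            ENNReal.ofReal (s ^ (-b)) *
              ∫⁻ ξ, ENNReal.ofReal (Real.exp (-2 * s * R ξ)) ∂μ :=
          ENNReal.tsum_le_tsum piece_lower
      _ = _ := hJ.symm
  · -- upper bound
    have piece_upper : ∀ n : ℕ,
        (∫⁻ s in Ioc ((2⁻¹:ℝ) ^ (n+1)) ((2⁻¹:ℝ) ^ n),
          ENNReal.ofReal (s ^ (-b)) *
            ∫⁻ ξ, ENNReal.ofReal (Real.exp (-2 * s * R ξ)) ∂μ) ≤
        ∫⁻ ξ, ENNReal.ofReal ((((2⁻¹:ℝ) ^ (n+1)) ^ ((1:ℝ)-b)) *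
          Real.exp (-2 * ((2⁻¹:ℝ) ^ (n+1)) * R ξ)) ∂μ := by
      intro n
      have h0 : (0:ℝ) < (2⁻¹:ℝ) ^ (n+1) := by positivity
      calc (∫⁻ s in Ioc ((2⁻¹:ℝ) ^ (n+1)) ((2⁻¹:ℝ) ^ n),
            ENNReal.ofReal (s ^ (-b)) *
              ∫⁻ ξ, ENNReal.ofReal (Real.exp (-2 * s * R ξ)) ∂μ)
          ≤ ∫⁻ _ in Ioc ((2⁻¹:ℝ) ^ (n+1)) ((2⁻¹:ℝ) ^ n),
              (ENNReal.ofReal (((2⁻¹:ℝ) ^ (n+1)) ^ (-b)) *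
               ∫⁻ ξ, ENNReal.ofReal (Real.exp (-2 * ((2⁻¹:ℝ) ^ (n+1)) * R ξ)) ∂μ) := by
            refine setLIntegral_mono' measurableSet_Ioc fun s hs => ?_
            exact mul_le_mul'
              (ENNReal.ofReal_le_ofReal
                (Real.rpow_le_rpow_of_nonpos h0 hs.1.le (by linarith)))
              (hI_anti h0.le hs.1.le)
        _ = (ENNReal.ofReal (((2⁻¹:ℝ) ^ (n+1)) ^ (-b)) *
              ∫⁻ ξ, ENNReal.ofReal (Real.exp (-2 * ((2⁻¹:ℝ) ^ (n+1)) * R ξ)) ∂μ) *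
              ENNReal.ofReal ((2⁻¹:ℝ) ^ (n+1)) := by
            rw [setLIntegral_const, hvol n]
        _ = ENNReal.ofReal ((((2⁻¹:ℝ) ^ (n+1)) ^ ((1:ℝ)-b))) *
              ∫⁻ ξ, ENNReal.ofReal (Real.exp (-2 * ((2⁻¹:ℝ) ^ (n+1)) * R ξ)) ∂μ := by
            rw [← mul_rpow_neg' h0 b, ENNReal.ofReal_mul h0.le]
            ring
        _ = ∫⁻ ξ, ENNReal.ofReal ((((2⁻¹:ℝ) ^ (n+1)) ^ ((1:ℝ)-b)) *
              Real.exp (-2 * ((2⁻¹:ℝ) ^ (n+1)) * R ξ)) ∂μ := by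
            rw [← lintegral_const_mul' _ _ ENNReal.ofReal_ne_top]
            exact lintegral_congr fun ξ =>
              (ENNReal.ofReal_mul (Real.rpow_nonneg h0.le _)).symm
    have hmeas : ∀ n : ℕ, Measurable fun ξ =>
        ENNReal.ofReal ((((2⁻¹:ℝ) ^ (n+1)) ^ ((1:ℝ)-b)) *
          Real.exp (-2 * ((2⁻¹:ℝ) ^ (n+1)) * R ξ)) := by
      intro n
      exact (((hR.const_mul _).exp).const_mul _).ennreal_ofReal
    calc (∫⁻ s in Ioc (0 : ℝ) 1, ENNReal.ofReal (s ^ (-b)) *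
          ∫⁻ ξ, ENNReal.ofReal (Real.exp (-2 * s * R ξ)) ∂μ)
        = ∑' n : ℕ, ∫⁻ s in Ioc ((2⁻¹:ℝ) ^ (n+1)) ((2⁻¹:ℝ) ^ n),
            ENNReal.ofReal (s ^ (-b)) *
              ∫⁻ ξ, ENNReal.ofReal (Real.exp (-2 * s * R ξ)) ∂μ := hJ
      _ ≤ ∑' n : ℕ, ∫⁻ ξ, ENNReal.ofReal ((((2⁻¹:ℝ) ^ (n+1)) ^ ((1:ℝ)-b)) *
            Real.exp (-2 * ((2⁻¹:ℝ) ^ (n+1)) * R ξ)) ∂μ :=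
          ENNReal.tsum_le_tsum piece_upper
      _ = ∫⁻ ξ, ∑' n : ℕ, ENNReal.ofReal ((((2⁻¹:ℝ) ^ (n+1)) ^ ((1:ℝ)-b)) *
            Real.exp (-2 * ((2⁻¹:ℝ) ^ (n+1)) * R ξ)) ∂μ :=
          (lintegral_tsum fun n => (hmeas n).aemeasurable).symm
      _ ≤ ∫⁻ ξ, ENNReal.ofReal (c₂ * (1 + R ξ) ^ (b - 1)) ∂μ := by
          refine lintegral_mono fun ξ => ?_
          rw [hc₂def]
          exact upper_pointwise' ⟨hb0, hb1⟩ (hR0 ξ)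
      _ = ENNReal.ofReal c₂ * ∫⁻ ξ, ENNReal.ofReal ((1 + R ξ) ^ (b - 1)) ∂μ := by
          rw [← lintegral_const_mul' _ _ ENNReal.ofReal_ne_top]
          exact lintegral_congr fun ξ => ENNReal.ofReal_mul hc₂0
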